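/- With notation as in the pencil decomposition and c_1, ..., c_{n+1} nonzero, if det(M_0 + x M_1) = 0 as a polynomial in C[x], then w Q^{-1} v = c_{n+1} and w Q^{-1} (B Q^{-1})^k v = 0 for all k ≥ 1. -/

import Mathlib

open Matrix

noncomputable def M0 (c : ℕ → ℂ) (n : ℕ) : Matrix (Fin n) (Fin n) ℂ :=
  fun i j => if (j : ℕ) ≤ (i : ℕ) + 1 then c ((i : ℕ) + 2 - (j : ℕ)) else 0

noncomputable def pm (c : ℕ → ℂ) (r : ℕ) : ℂ := (M0 c r).det

noncomputable def Qmat (c : ℕ → ℂ) (s : ℕ) : Matrix (Fin s) (Fin s) ℂ :=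
  fun i j => if (j : ℕ) ≤ (i : ℕ) then c ((i : ℕ) + 1 - (j : ℕ)) else 0
/-- The matrix `M1` with ones exactly on the second superdiagonal. -/
noncomputable def M1mat (n : ℕ) : Matrix (Fin n) (Fin n) ℂ :=
  fun i j => if (j : ℕ) = (i : ℕ) + 2 then 1 else 0

/-- The upper shift matrix `B`. -/
noncomputable def Bmat (s : ℕ) : Matrix (Fin s) (Fin s) ℂ :=
  fun i j => if (j : ℕ) = (i : ℕ) + 1 then 1 else 0

/-- Schur-type identity obtained by a column operation: if the last-column-block
decomposition of `M` is `[[v, A], [cc, w]]` (after moving the first column), `M` is singular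
and `A` is nonsingular, then `cc * det A = w ⬝ adj(A) v`. -/
lemma aux_schur17 {R : Type*} [CommRing R] [IsDomain R] {m : ℕ}
    (M : Matrix (Fin (m+1)) (Fin (m+1)) R) (A : Matrix (Fin m) (Fin m) R)
    (v w : Fin m → R) (cc : R)
    (h1 : ∀ i j, M i.castSucc j.succ = A i j)
    (h2 : ∀ i, M i.castSucc 0 = v i)
    (h3 : ∀ j, M (Fin.last m) j.succ = w j)
    (h4 : M (Fin.last m) 0 = cc)
    (hd : A.det ≠ 0) (hM : M.det = 0) :
    cc * A.det = w ⬝ᵥ (A.adjugate *ᵥ v) := by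
  set y : Fin m → R := A.adjugate *ᵥ v with hy
  set E : Matrix (Fin (m+1)) (Fin (m+1)) R :=
    fun i j => if j = 0 then (Fin.cases A.det (fun i' => -y i') i : R)
      else if i = j then 1 else 0 with hE
  have hdetE : E.det = A.det := by
    rw [det_succ_row_zero, Finset.sum_eq_single 0]
    · have : E.submatrix Fin.succ ((0 : Fin (m+1)).succAbove) = 1 := by
        ext i j
        rw [submatrix_apply]
        simp [hE, Fin.succAbove_zero, Fin.succ_ne_zero, Fin.succ_inj, one_apply, eq_comm]
      rw [this]
      simp [hE]
    · intro j _ hj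
      have : E 0 j = 0 := by simp [hE, hj, Ne.symm hj]
      rw [this]; ring
    · simp
  have hcolE : ∀ i : Fin (m+1), (M * E) i 0 = M i 0 * A.det - ∑ j, M i j.succ * y j := by
    intro i
    rw [mul_apply, Fin.sum_univ_succ]
    simp only [hE, if_pos rfl]
    rw [Fin.cases_zero]
    simp only [Fin.cases_succ, mul_neg]
    rw [Finset.sum_neg_distrib, ← sub_eq_add_neg]
  have hAy : A *ᵥ y = A.det • v := by
    rw [hy, mulVec_mulVec, mul_adjugate, smul_mulVec, one_mulVec]
  have hcol0 : ∀ i : Fin m, (M * E) i.castSucc 0 = 0 := by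
    intro i
    rw [hcolE, h2]
    have : ∑ j, M i.castSucc j.succ * y j = (A *ᵥ y) i := by
      rw [mulVec, dotProduct]
      exact Finset.sum_congr rfl fun j _ => by rw [h1]
    rw [this, hAy]
    simp [mul_comm]
  have hcoll : (M * E) (Fin.last m) 0 = cc * A.det - w ⬝ᵥ y := by
    rw [hcolE, h4]
    congr 1
    exact Finset.sum_congr rfl fun j _ => by rw [h3]
  have hrest : ∀ (i : Fin (m+1)) (j : Fin m), (M * E) i j.succ = M i j.succ := by
    intro i j
    rw [mul_apply]
    have : ∀ k : Fin (m+1), M i k * E k j.succ = if k = j.succ then M i j.succ else 0 := by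
      intro k
      by_cases h : k = j.succ <;> simp [hE, h, Fin.succ_ne_zero, Ne.symm (Fin.succ_ne_zero j)]
    simp only [this, Finset.sum_ite_eq', Finset.mem_univ, if_pos]
  have hdetME : (M * E).det = 0 := by rw [det_mul, hM, zero_mul]
  rw [det_succ_column_zero, Finset.sum_eq_single (Fin.last m)] at hdetME
  · have hsub : (M * E).submatrix (Fin.last m).succAbove Fin.succ = A := by
      ext i j
      rw [submatrix_apply, Fin.succAbove_last, hrest, h1]
    rw [hsub, hcoll, Fin.val_last] at hdetME
    have h5 : ((-1 : R) ^ m) * ((cc * A.det - w ⬝ᵥ y) * A.det) = 0 := by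
      rw [← hdetME]; ring
    rcases mul_eq_zero.mp h5 with h | h
    · exact absurd h (pow_ne_zero _ (by simp))
    rcases mul_eq_zero.mp h with h | h
    · exact sub_eq_zero.mp h
    · exact absurd h hd
  · intro i _ hi
    obtain ⟨i', rfl⟩ := Fin.exists_castSucc_eq.mpr hi
    rw [hcol0]; ring
  · simp

/-- Necessity in Criterion (S): if `det (M0 + x M1) = 0` in `ℂ[x]`, then
`w Q⁻¹ v = c (n+1)` and `w Q⁻¹ (B Q⁻¹)^k v = 0` for all `k ≥ 1`. -/
theorem stmt17 (n : ℕ) (hn : 3 ≤ n) (c : ℕ → ℂ)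
    (hc : ∀ k, 1 ≤ k → k ≤ n + 1 → c k ≠ 0)
    (hdet : Matrix.det (fun i j : Fin n =>
      Polynomial.C (M0 c n i j) + Polynomial.X * Polynomial.C (M1mat n i j)) = 0) :
    (fun i : Fin (n - 1) => c (n - (i : ℕ))) ⬝ᵥ
        ((Qmat c (n - 1))⁻¹ *ᵥ fun i : Fin (n - 1) => c ((i : ℕ) + 2)) = c (n + 1) ∧
    ∀ k, 1 ≤ k →
      (fun i : Fin (n - 1) => c (n - (i : ℕ))) ⬝ᵥ
        (((Qmat c (n - 1))⁻¹ * (Bmat (n - 1) * (Qmat c (n - 1))⁻¹) ^ k) *ᵥ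
          fun i : Fin (n - 1) => c ((i : ℕ) + 2)) = 0 := by
  open Polynomial in
  obtain ⟨m, rfl⟩ : ∃ m, n = m + 1 := ⟨n - 1, by omega⟩
  have hc1 : c 1 ≠ 0 := hc 1 (by omega) (by omega)
  -- the complex-side data
  set Qm : Matrix (Fin m) (Fin m) ℂ := Qmat c m with hQm
  set Bm : Matrix (Fin m) (Fin m) ℂ := Bmat m with hBm
  set Qi : Matrix (Fin m) (Fin m) ℂ := Qm⁻¹ with hQi
  set T : Matrix (Fin m) (Fin m) ℂ := Bm * Qi with hT
  set v0 : Fin m → ℂ := fun i => c ((i : ℕ) + 2) with hv0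
  set w0 : Fin m → ℂ := fun i => c (m + 1 - (i : ℕ)) with hw0
  set g : ℕ → ℂ := fun k => w0 ⬝ᵥ ((Qi * T ^ k) *ᵥ v0) with hg
  have hQdet : Qm.det = c 1 ^ m := by
    rw [Matrix.det_of_lowerTriangular Qm (by
      intro i j h
      simp only [OrderDual.toDual_lt_toDual] at h
      simp [hQm, Qmat, Nat.not_le.mpr (Fin.lt_iff_val_lt_val.mp h)])]
    have : ∀ i : Fin m, Qm i i = c 1 := by intro i; simp [hQm, Qmat]
    rw [Finset.prod_congr rfl fun i _ => this i]
    simp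
  have hQunit : IsUnit Qm.det := by
    rw [hQdet]; exact isUnit_iff_ne_zero.mpr (pow_ne_zero _ hc1)
  have hQQi : Qm * Qi = 1 := mul_nonsing_inv _ hQunit
  -- the polynomial-side data
  set Φ : Matrix (Fin m) (Fin m) ℂ →+* Matrix (Fin m) (Fin m) (Polynomial ℂ) :=
    (Polynomial.C : ℂ →+* Polynomial ℂ).mapMatrix with hΦ
  set A : Matrix (Fin m) (Fin m) (Polynomial ℂ) := Φ Qm + (X : Polynomial ℂ) • Φ Bm with hA
  set vR : Fin m → Polynomial ℂ := fun i => Polynomial.C (v0 i) with hvR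
  set wR : Fin m → Polynomial ℂ := fun i => Polynomial.C (w0 i) with hwR
  set MM : Matrix (Fin (m+1)) (Fin (m+1)) (Polynomial ℂ) := fun i j =>
    Polynomial.C (M0 c (m+1) i j) + Polynomial.X * Polynomial.C (M1mat (m+1) i j) with hMM
  have hAapp : ∀ i j : Fin m, A i j =
      Polynomial.C (Qm i j) + Polynomial.X * Polynomial.C (Bm i j) := by
    intro i j
    rw [hA, Matrix.add_apply, Matrix.smul_apply, hΦ, RingHom.mapMatrix_apply,
      RingHom.mapMatrix_apply, Matrix.map_apply, Matrix.map_apply, smul_eq_mul]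
  -- block identification
  have h1 : ∀ i j : Fin m, MM i.castSucc j.succ = A i j := by
    intro i j
    rw [hAapp, hMM]
    simp only [hQm, hBm, M0, M1mat, Qmat, Bmat, Fin.coe_castSucc, Fin.val_succ]
    congr 2
    · by_cases h : (j : ℕ) ≤ (i : ℕ)
      · rw [if_pos (by omega), if_pos h]
        congr 1
        omega
      · rw [if_neg (by omega), if_neg h]
    · by_cases h : (j : ℕ) = (i : ℕ) + 1
      · rw [if_pos (by omega), if_pos h]
      · rw [if_neg (by omega), if_neg h]
  have h2 : ∀ i : Fin m, MM i.castSucc 0 = vR i := by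
    intro i
    rw [hMM]
    simp only [M0, M1mat, Fin.coe_castSucc]
    rw [if_pos (by simp), if_neg (by simp)]
    simp [hvR, hv0]
  have h3 : ∀ j : Fin m, MM (Fin.last m) j.succ = wR j := by
    intro j
    rw [hMM]
    simp only [M0, M1mat, Fin.val_last, Fin.val_succ]
    rw [if_pos (by omega), if_neg (by omega)]
    have : m + 2 - ((j : ℕ) + 1) = m + 1 - (j : ℕ) := by omega
    simp [this, hwR, hw0]
  have h4 : MM (Fin.last m) 0 = Polynomial.C (c (m + 2)) := by
    rw [hMM]
    simp only [M0, M1mat, Fin.val_last]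
    rw [if_pos (by simp), if_neg (by simp)]
    simp
  -- evaluation at 0
  set ε : Polynomial ℂ →+* ℂ := Polynomial.evalRingHom 0 with hε
  have hεC : ∀ a : ℂ, ε (Polynomial.C a) = a := fun a => by simp [hε]
  have hεX : ε (X : Polynomial ℂ) = 0 := by simp [hε]
  have hεA : ε.mapMatrix A = Qm := by
    ext i j
    rw [RingHom.mapMatrix_apply, Matrix.map_apply, hAapp]
    simp [hε]
  have hεd : ε A.det = c 1 ^ m := by
    rw [RingHom.map_det, hεA, hQdet]
  have hεdne : ε A.det ≠ 0 := by rw [hεd]; exact pow_ne_zero _ hc1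
  have hdA : A.det ≠ 0 := fun h => hεdne (by rw [h, map_zero])
  -- the key Schur identity
  have hkey : Polynomial.C (c (m + 2)) * A.det = wR ⬝ᵥ (A.adjugate *ᵥ vR) :=
    aux_schur17 MM A vR wR _ h1 h2 h3 h4 hdA hdet
  -- telescoping expansion of the adjugate
  have hAS : ∀ N : ℕ, A * (∑ k ∈ Finset.range N, (-X : Polynomial ℂ)^k • Φ (Qi * T^k))
      = 1 - (-X : Polynomial ℂ)^N • Φ (T^N) := by
    intro N
    induction N with
    | zero => simp
    | succ N ih =>
      rw [Finset.sum_range_succ, Matrix.mul_add, ih, Matrix.mul_smul]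
      have ha1 : A * Φ (Qi * T^N) = Φ (T^N) + (X : Polynomial ℂ) • Φ (T^(N+1)) := by
        rw [hA, Matrix.add_mul, Matrix.smul_mul, ← _root_.map_mul Φ, ← _root_.map_mul Φ,
          ← Matrix.mul_assoc, hQQi, Matrix.one_mul, ← Matrix.mul_assoc, ← hT, ← pow_succ']
      rw [ha1, smul_add, smul_smul]
      have ha2 : ((-X : Polynomial ℂ)^N * X) = -((-X : Polynomial ℂ)^(N+1)) := by ring
      rw [ha2, neg_smul]
      abel
  have hadj : ∀ N : ℕ, A.adjugate
      = A.det • (∑ k ∈ Finset.range N, (-X : Polynomial ℂ)^k • Φ (Qi * T^k))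
        + (-X : Polynomial ℂ)^N • (A.adjugate * Φ (T^N)) := by
    intro N
    have h := congrArg (fun M => A.adjugate * M) (hAS N)
    rw [← Matrix.mul_assoc, Matrix.adjugate_mul, Matrix.smul_mul, Matrix.one_mul,
      Matrix.mul_sub, Matrix.mul_one, Matrix.mul_smul] at h
    rw [h]
    abel
  -- mapping dot products through C
  have hmap : ∀ M : Matrix (Fin m) (Fin m) ℂ,
      wR ⬝ᵥ (Φ M *ᵥ vR) = Polynomial.C (w0 ⬝ᵥ (M *ᵥ v0)) := by
    intro M
    have hm1 : Φ M *ᵥ vR = fun i => Polynomial.C ((M *ᵥ v0) i) := by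
      funext i
      rw [hΦ, RingHom.mapMatrix_apply]
      exact ((Polynomial.C : ℂ →+* Polynomial ℂ).map_mulVec M v0 i).symm
    rw [hm1, RingHom.map_dotProduct]
    rfl
  have hsumv : ∀ (s : Finset ℕ) (F : ℕ → Matrix (Fin m) (Fin m) (Polynomial ℂ)),
      wR ⬝ᵥ ((∑ k ∈ s, F k) *ᵥ vR) = ∑ k ∈ s, wR ⬝ᵥ (F k *ᵥ vR) := by
    intro s F
    induction s using Finset.cons_induction with
    | empty => simp
    | cons a s ha ih =>
      rw [Finset.sum_cons, Finset.sum_cons, Matrix.add_mulVec, dotProduct_add, ih]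
  -- the master identity
  have hW : ∀ N : ℕ, Polynomial.C (c (m + 2)) * A.det
      = A.det * (∑ k ∈ Finset.range N, (-X : Polynomial ℂ)^k * Polynomial.C (g k))
        + (-X : Polynomial ℂ)^N * (wR ⬝ᵥ ((A.adjugate * Φ (T^N)) *ᵥ vR)) := by
    intro N
    rw [hkey]
    conv_lhs => rw [hadj N]
    rw [Matrix.add_mulVec, smul_mulVec, smul_mulVec, dotProduct_add,
      dotProduct_smul, dotProduct_smul, smul_eq_mul, smul_eq_mul]
    congr 2
    rw [hsumv]
    refine Finset.sum_congr rfl fun k _ => ?_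
    rw [smul_mulVec, dotProduct_smul, smul_eq_mul, hmap]
  -- extract the constant coefficient
  have hg0 : g 0 = c (m + 2) := by
    have h := congrArg ε (hW 1)
    simp only [Finset.sum_range_one, pow_zero, one_mul, pow_one, _root_.map_add, _root_.map_mul,
      _root_.map_neg, hεX, neg_zero, zero_mul, add_zero, hεC] at h
    exact (mul_left_cancel₀ hεdne (by rw [← h, mul_comm])).symm
  have hgk : ∀ k, 1 ≤ k → g k = 0 := by
    intro k
    induction k using Nat.strong_induction_on with
    | _ k IH =>
      intro hk1
      have hsum : ∑ j ∈ Finset.range (k+1), (-X : Polynomial ℂ)^j * Polynomial.C (g j)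
          = Polynomial.C (c (m+2)) + (-X : Polynomial ℂ)^k * Polynomial.C (g k) := by
        rw [Finset.sum_range_succ]
        congr 1
        rw [Finset.sum_eq_single 0]
        · rw [pow_zero, one_mul, hg0]
        · intro j hj hj0
          rw [IH j (Finset.mem_range.mp hj) (Nat.one_le_iff_ne_zero.mpr hj0)]
          simp
        · intro h0
          exact absurd (Finset.mem_range.mpr (by omega)) h0
      have h2 := hW (k+1)
      rw [hsum] at h2
      set hh : Polynomial ℂ := wR ⬝ᵥ ((A.adjugate * Φ (T^(k+1))) *ᵥ vR) with hhh
      have h3 : (-X : Polynomial ℂ)^k * (A.det * Polynomial.C (g k) + (-X) * hh) = 0 := by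
        linear_combination -h2
      have h4 : A.det * Polynomial.C (g k) + (-X) * hh = 0 := by
        rcases mul_eq_zero.mp h3 with h | h
        · exact absurd h (pow_ne_zero _ (neg_ne_zero.mpr Polynomial.X_ne_zero))
        · exact h
      have h5 := congrArg ε h4
      simp only [_root_.map_add, _root_.map_mul, _root_.map_neg, hεX, neg_zero, zero_mul, add_zero, hεC,
        _root_.map_zero] at h5
      rcases mul_eq_zero.mp h5 with h | h
      · exact absurd h hεdne
      · exact h
  constructor
  · have hQT : Qi * T ^ 0 = Qi := by rw [pow_zero, mul_one]
    have h := hg0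
    simp only [hg, hQT] at h
    exact h
  · intro k hk
    have h := hgk k hk
    simp only [hg] at h
    exact h
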